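/- The number of maximal intervals produced in Phase 2 of the CPM algorithm (cutting the LCP array at positions with value < m) equals the number of distinct length-m substrings of T plus the number of suffixes of T shorter than m; in particular, if T ends with a unique terminator and all suffixes of length < m are counted as singleton intervals, the intervals of size ≥ 1 containing suffixes of length ≥ m are in bijection with the distinct length-m substrings of T. -/

import Mathlib

/-- Length of the longest common prefix of two lists. -/
def commonPrefixLen {α : Type*} [DecidableEq α] : List α → List α → ℕ
  | a :: as, b :: bs => if a = b then commonPrefixLen as bs + 1 else 0
  | _, _ => 0

lemma cpl_le_left {α : Type*} [DecidableEq α] :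
    ∀ (a b : List α), commonPrefixLen a b ≤ a.length
  | [], _ => by simp [commonPrefixLen]
  | _ :: _, [] => by simp [commonPrefixLen]
  | a :: as, b :: bs => by
    simp only [commonPrefixLen, List.length_cons]
    split
    · exact Nat.succ_le_succ (cpl_le_left as bs)
    · omega

lemma cpl_le_right {α : Type*} [DecidableEq α] :
    ∀ (a b : List α), commonPrefixLen a b ≤ b.length
  | [], _ => by simp [commonPrefixLen]
  | _ :: _, [] => by simp [commonPrefixLen]
  | a :: as, b :: bs => by
    simp only [commonPrefixLen, List.length_cons]
    split
    · exact Nat.succ_le_succ (cpl_le_right as bs)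
    · omega

lemma cpl_take {α : Type*} [DecidableEq α] :
    ∀ (m : ℕ) (a b : List α), m ≤ commonPrefixLen a b → a.take m = b.take m
  | 0, _, _, _ => by simp
  | m+1, [], b, h => by simp [commonPrefixLen] at h
  | m+1, _ :: _, [], h => by simp [commonPrefixLen] at h
  | m+1, a :: as, b :: bs, h => by
    simp only [commonPrefixLen] at h
    split at h
    · rename_i hab
      subst hab
      simp only [List.take_succ_cons]
      rw [cpl_take m as bs (by omega)]
    · omega

lemma cpl_ge {α : Type*} [DecidableEq α] :
    ∀ (m : ℕ) (a b : List α), a.take m = b.take m → m ≤ a.length → m ≤ b.length →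
      m ≤ commonPrefixLen a b
  | 0, _, _, _, _, _ => Nat.zero_le _
  | m+1, [], _, _, ha, _ => by simp at ha
  | m+1, _ :: _, [], _, _, hb => by simp at hb
  | m+1, a :: as, b :: bs, h, ha, hb => by
    simp only [List.take_succ_cons, List.cons.injEq] at h
    simp only [commonPrefixLen, h.1, if_true]
    have := cpl_ge m as bs h.2 (by simpa using ha) (by simpa using hb)
    omega

lemma lex_take {α : Type*} [LT α] {x y : List α} (h : List.Lex (· < ·) x y) :
    ∀ (m : ℕ), x.take m = y.take m ∨ List.Lex (· < ·) (x.take m) (y.take m) := by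
  induction h with
  | nil =>
    intro m
    cases m with
    | zero => simp
    | succ m => right; simp only [List.take_nil, List.take_succ_cons]; exact List.Lex.nil
  | @cons a as bs h ih =>
    intro m
    cases m with
    | zero => simp
    | succ m =>
      simp only [List.take_succ_cons]
      rcases ih m with h' | h'
      · left; rw [h']
      · right; exact List.Lex.cons h'
  | rel h =>
    intro m
    cases m with
    | zero => simp
    | succ m =>
      right; simp only [List.take_succ_cons]; exact List.Lex.rel h

lemma take_between {α : Type*} [LinearOrder α] {m : ℕ} {x y z : List α}
    (hxy : List.Lex (· < ·) x y) (hyz : List.Lex (· < ·) y z)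
    (hxz : x.take m = z.take m) (hx : m ≤ x.length) :
    y.take m = x.take m ∧ m ≤ y.length := by
  have hlen : (x.take m).length = m := by simp [hx]
  rcases lex_take hxy m with h1 | h1
  · refine ⟨h1.symm, ?_⟩
    have : (y.take m).length = m := by rw [← h1, hlen]
    simp at this; omega
  rcases lex_take hyz m with h2 | h2
  · rw [h2, ← hxz]
    have : (y.take m).length = m := by rw [h2, ← hxz, hlen]
    simp at this
    exact ⟨rfl, by omega⟩
  · exfalso
    rw [hxz] at h1
    exact absurd (List.lex_trans (r := (· < ·)) (fun hab hbc => lt_trans hab hbc) h1 h2) (List.lex_irrefl (fun a => lt_irrefl a) _)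

open Classical in
/-- The number of maximal intervals produced by cutting the LCP array at
positions with value `< m` (equivalently, the number of such cut positions)
equals the number of distinct length-`m` substrings of `T` plus the number of
suffixes of `T` shorter than `m` (which is `min (m-1) n`). -/
theorem stmt15 {α : Type*} [LinearOrder α] (T : List α) (m : ℕ) (hm : 1 ≤ m)
    (SA : Fin T.length → Fin T.length) (hbij : Function.Bijective SA)
    (LCP : Fin T.length → ℕ)
    (hsorted : ∀ i j : Fin T.length, i < j →
      List.Lex (· < ·) (T.drop (SA i).val) (T.drop (SA j).val))
    (hLCP : ∀ k : Fin T.length, 0 < k.val →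
      LCP k = commonPrefixLen
        (T.drop (SA ⟨k.val - 1, lt_of_le_of_lt (Nat.sub_le _ _) k.isLt⟩).val)
        (T.drop (SA k).val))
    (hLCP0 : ∀ k : Fin T.length, k.val = 0 → LCP k = 0) :
    (Finset.univ.filter (fun j : Fin T.length => LCP j < m)).card =
      {S : List α | S.length = m ∧ S <:+: T}.ncard + min (m - 1) T.length := by
  classical
  set s : Fin T.length → List α := fun j => T.drop (SA j).val with hs
  set f : Fin T.length → List α := fun j => (s j).take m with hf
  -- every short suffix position is a cut
  have hcut_short : ∀ j, (s j).length < m → LCP j < m := by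
    intro j hj
    rcases Nat.eq_zero_or_pos j.val with h0 | h0
    · rw [hLCP0 j h0]; omega
    · have := hLCP j h0
      rw [this]
      exact lt_of_le_of_lt (cpl_le_right _ _) hj
  set A : Finset (Fin T.length) :=
    Finset.univ.filter (fun j : Fin T.length => (s j).length < m) with hA
  set B : Finset (Fin T.length) :=
    Finset.univ.filter (fun j : Fin T.length => LCP j < m ∧ m ≤ (s j).length) with hB
  have hsplit : Finset.univ.filter (fun j : Fin T.length => LCP j < m) = A ∪ B := by
    ext j
    simp only [hA, hB, Finset.mem_filter, Finset.mem_union, Finset.mem_univ, true_and]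
    constructor
    · intro h
      by_cases hl : (s j).length < m
      · exact Or.inl hl
      · exact Or.inr ⟨h, by omega⟩
    · rintro (h | ⟨h, _⟩)
      · exact hcut_short j h
      · exact h
  have hdisj : Disjoint A B := by
    rw [Finset.disjoint_left]
    intro j hj hj'
    simp only [hA, hB, Finset.mem_filter, Finset.mem_univ, true_and] at hj hj'
    omega
  rw [hsplit, Finset.card_union_of_disjoint hdisj]
  -- card of A
  have hslen : ∀ j, (s j).length = T.length - (SA j).val := by
    intro j; simp [hs]
  have hAcard : A.card = min (m - 1) T.length := by
    have h1 : A.card = (Finset.univ.filter (fun i : Fin T.length => T.length - i.val < m)).card := by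
      apply Finset.card_bij (fun j _ => SA j)
      · intro j hj
        simp only [hA, Finset.mem_filter, Finset.mem_univ, true_and] at hj ⊢
        rwa [hslen] at hj
      · intro j _ j' _ h
        exact hbij.1 h
      · intro i hi
        obtain ⟨j, hj⟩ := hbij.2 i
        refine ⟨j, ?_, hj⟩
        simp only [hA, Finset.mem_filter, Finset.mem_univ, true_and] at hi ⊢
        rw [hslen, hj]
        exact hi
    have h2 : (Finset.univ.filter (fun i : Fin T.length => T.length - i.val < m)).card
        = ((Finset.range T.length).filter (fun i => T.length - i < m)).card := by
      apply Finset.card_bij (fun i _ => i.val)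
      · intro i hi
        simp only [Finset.mem_filter, Finset.mem_univ, true_and, Finset.mem_range] at hi ⊢
        exact ⟨i.isLt, hi⟩
      · intro i _ i' _ h
        exact Fin.val_injective h
      · intro i hi
        simp only [Finset.mem_filter, Finset.mem_range] at hi
        exact ⟨⟨i, hi.1⟩, by simpa using hi.2, rfl⟩
    have h3 : ((Finset.range T.length).filter (fun i => T.length - i < m)) = Finset.Ico (T.length - (m-1)) T.length := by
      ext i; simp only [Finset.mem_filter, Finset.mem_range, Finset.mem_Ico]; omega
    rw [h1, h2, h3, Nat.card_Ico]
    omega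
  -- card of B equals the number of distinct length-m substrings
  have key : ∀ j j' : Fin T.length, LCP j < m → m ≤ (s j).length →
      LCP j' < m → m ≤ (s j').length → j < j' → f j ≠ f j' := by
    intro j j' hc hl hc' hl' hlt heq
    have hj'pos : 0 < j'.val := lt_of_le_of_lt (Nat.zero_le _) hlt
    set j₁ : Fin T.length := ⟨j'.val - 1, lt_of_le_of_lt (Nat.sub_le _ _) j'.isLt⟩ with hj₁
    have hlcp' : LCP j' = commonPrefixLen (s j₁) (s j') := hLCP j' hj'pos
    have h1 : (s j₁).take m = (s j).take m ∧ m ≤ (s j₁).length := by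
      rcases eq_or_lt_of_le (Nat.le_sub_one_of_lt (show j.val < j'.val from hlt)) with he | hlt2
      · have : j₁ = j := by
          apply Fin.ext; simp [hj₁, ← he]
        rw [this]
        exact ⟨rfl, hl⟩
      · have hja : j < j₁ := by
          rw [Fin.lt_def]; simpa [hj₁] using hlt2
        have hjb : j₁ < j' := by
          rw [Fin.lt_def]; simp [hj₁]; omega
        exact take_between (hsorted j j₁ hja) (hsorted j₁ j' hjb)
          (show (s j).take m = (s j').take m from heq) hl
    have hge : m ≤ commonPrefixLen (s j₁) (s j') := by
      refine cpl_ge m _ _ ?_ h1.2 hl'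
      rw [h1.1]; exact heq
    omega
  have hBcard : {S : List α | S.length = m ∧ S <:+: T}.ncard = B.card := by
    have himg : {S : List α | S.length = m ∧ S <:+: T} = ↑(B.image f) := by
      ext S
      simp only [Set.mem_setOf_eq, Finset.coe_image, Set.mem_image, Finset.mem_coe]
      constructor
      · rintro ⟨hlen, u, v, huv⟩
        have hdropS : T.drop u.length = S ++ v := by
          rw [← huv, List.append_assoc, List.drop_left]
        have hTlen : T.length = u.length + (m + v.length) := by
          rw [← huv]; simp [hlen]
        have hult : u.length < T.length := by omega
        obtain ⟨j₀, hj₀⟩ := hbij.2 ⟨u.length, hult⟩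
        set C : Finset (Fin T.length) :=
          Finset.univ.filter (fun j : Fin T.length => m ≤ (s j).length ∧ f j = S) with hC
        have hj₀C : j₀ ∈ C := by
          have hlen0 : (s j₀).length = m + v.length := by
            rw [hslen, hj₀]; simp; omega
          have hfj₀ : f j₀ = S := by
            simp only [hf, hs, hj₀]
            rw [hdropS, List.take_left' hlen]
          simp only [hC, Finset.mem_filter, Finset.mem_univ, true_and]
          exact ⟨by omega, hfj₀⟩
        have hCne : C.Nonempty := ⟨j₀, hj₀C⟩
        set j := C.min' hCne with hj
        have hjC : j ∈ C := C.min'_mem hCne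
        simp only [hC, Finset.mem_filter, Finset.mem_univ, true_and] at hjC
        have hcut : LCP j < m := by
          rcases Nat.eq_zero_or_pos j.val with h0 | h0
          · rw [hLCP0 j h0]; omega
          · by_contra hge
            push_neg at hge
            set j₁ : Fin T.length := ⟨j.val - 1, lt_of_le_of_lt (Nat.sub_le _ _) j.isLt⟩ with hj₁
            have hlcp' : LCP j = commonPrefixLen (s j₁) (s j) := hLCP j h0
            rw [hlcp'] at hge
            have htk := cpl_take m _ _ hge
            have hlen1 : m ≤ (s j₁).length := le_trans hge (cpl_le_left _ _)
            have hj₁C : j₁ ∈ C := by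
              simp only [hC, Finset.mem_filter, Finset.mem_univ, true_and]
              refine ⟨hlen1, ?_⟩
              show (s j₁).take m = S
              rw [htk]
              exact hjC.2
            have := C.min'_le j₁ hj₁C
            rw [← hj] at this
            have : j.val ≤ j.val - 1 := this
            omega
        refine ⟨j, ?_, hjC.2⟩
        simp only [hB, Finset.mem_filter, Finset.mem_univ, true_and]
        exact ⟨hcut, hjC.1⟩
      · rintro ⟨j, hjB, rfl⟩
        simp only [hB, Finset.mem_filter, Finset.mem_univ, true_and] at hjB
        constructor
        · simp only [hf]
          rw [List.length_take]
          omega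
        · exact ((s j).take_prefix m).isInfix.trans ((T.drop_suffix (SA j).val).isInfix)
    rw [himg, Set.ncard_coe_finset]
    apply Finset.card_image_of_injOn
    intro j hj j' hj' heq
    simp only [hB, Finset.mem_coe, Finset.mem_filter, Finset.mem_univ, true_and] at hj hj'
    by_contra hne
    rcases lt_or_gt_of_ne hne with h | h
    · exact key j j' hj.1 hj.2 hj'.1 hj'.2 h heq
    · exact key j' j hj'.1 hj'.2 hj.1 hj.2 h heq.symm
  rw [hAcard, hBcard]
  omega
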